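/- Let c_1 = X⊗I, c_2 = Y⊗I, c_3 = Z⊗X, c_4 = Z⊗Y be the Jordan–Wigner operators on 2 qubits. For every pair of matrices V, W ∈ SU(2) there exists a real antisymmetric 4×4 matrix h = [h_{μν}] such that, setting H = i Σ_{μ,ν=1}^{4} h_{μν} c_μ c_ν, the matrix H is Hermitian and exp(iH) = G(V,W), where G(V,W) is the 4×4 matrix with entries G_{11}=p, G_{14}=q, G_{41}=r, G_{44}=s (the entries of V = [[p,q],[r,s]]), G_{22}=w, G_{23}=x, G_{32}=y, G_{33}=z (the entries of W = [[w,x],[y,z]]), and all other entries zero. -/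

import Mathlib

noncomputable section

open Matrix Complex

/- The Jordan–Wigner operators on 2 qubits, written as explicit 4×4 matrices in
the basis `00,01,10,11` ↔ `1,2,3,4`:
`c₁ = X⊗I`, `c₂ = Y⊗I`, `c₃ = Z⊗X`, `c₄ = Z⊗Y`. -/
def cJW : Fin 4 → Matrix (Fin 4) (Fin 4) ℂ
  | 0 => !![0,0,1,0; 0,0,0,1; 1,0,0,0; 0,1,0,0]
  | 1 => !![0,0,-I,0; 0,0,0,-I; I,0,0,0; 0,I,0,0]
  | 2 => !![0,1,0,0; 1,0,0,0; 0,0,0,-1; 0,0,-1,0]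
  | 3 => !![0,-I,0,0; I,0,0,0; 0,0,0,I; 0,0,-I,0]

/-- `G(V,W)` for 2×2 matrices `V = [[p,q],[r,s]]`, `W = [[w,x],[y,z]]`. -/
def Gmat (V W : Matrix (Fin 2) (Fin 2) ℂ) : Matrix (Fin 4) (Fin 4) ℂ :=
  !![V 0 0, 0, 0, V 0 1;
     0, W 0 0, W 0 1, 0;
     0, W 1 0, W 1 1, 0;
     V 1 0, 0, 0, V 1 1]

set_option maxHeartbeats 1000000



attribute [local instance] Matrix.linftyOpNormedRing Matrix.linftyOpNormedAlgebra

variable {n : Type*} [Fintype n] [DecidableEq n]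

/-- exp of (t i)•P for an involution P. -/
lemma exp_smul_involution (P : Matrix n n ℂ) (hP : P * P = 1) (t : ℝ) :
    NormedSpace.exp (((t : ℂ) * Complex.I) • P)
      = (Complex.cos t) • (1 : Matrix n n ℂ) + (Complex.sin t * Complex.I) • P := by
  have expand : ∀ x y u v : ℂ, (x • (1 : Matrix n n ℂ) + y • P) * (u • 1 + v • P)
      = (x*u + y*v) • 1 + (x*v + y*u) • P := by
    intro x y u v
    rw [add_mul, mul_add, mul_add]
    simp only [smul_mul_assoc, mul_smul_comm, hP, mul_one, one_mul]
    match_scalars <;> ring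
  let f : ℂ × ℂ →ₐ[ℂ] Matrix n n ℂ :=
    { toFun := fun p => ((p.1 + p.2)/2) • 1 + ((p.1 - p.2)/2) • P
      map_one' := by simp
      map_mul' := by
        intro p q
        simp only [Prod.fst_mul, Prod.snd_mul, expand]
        match_scalars <;> ring
      map_zero' := by simp
      map_add' := by
        intro p q
        simp only [Prod.fst_add, Prod.snd_add]
        match_scalars <;> ring
      commutes' := by
        intro c
        simp [Algebra.algebraMap_eq_smul_one] }
  have hfc : Continuous f := by
    show Continuous fun p : ℂ × ℂ => ((p.1 + p.2)/2) • (1 : Matrix n n ℂ) + ((p.1 - p.2)/2) • P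
    fun_prop
  have key := NormedSpace.map_exp f hfc (((t:ℂ) * Complex.I, -((t:ℂ) * Complex.I)) : ℂ × ℂ)
  have hfp : f (((t:ℂ) * Complex.I, -((t:ℂ) * Complex.I)) : ℂ × ℂ) = ((t : ℂ) * Complex.I) • P := by
    show ((((t:ℂ)*Complex.I) + -((t:ℂ)*Complex.I))/2) • (1 : Matrix n n ℂ) + _ • P = _
    match_scalars <;> ring
  have hexp : NormedSpace.exp (((t:ℂ) * Complex.I, -((t:ℂ) * Complex.I)) : ℂ × ℂ)
      = (Complex.exp ((t:ℂ) * Complex.I), Complex.exp (-((t:ℂ) * Complex.I))) := by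
    ext
    · rw [Prod.fst_exp, Complex.exp_eq_exp_ℂ]
    · rw [Prod.snd_exp, Complex.exp_eq_exp_ℂ]
  rw [hfp] at key
  refine key.symm.trans ?_; rw [hexp]
  show ((Complex.exp ((t:ℂ)*Complex.I) + Complex.exp (-((t:ℂ)*Complex.I)))/2) • (1 : Matrix n n ℂ)
      + ((Complex.exp ((t:ℂ)*Complex.I) - Complex.exp (-((t:ℂ)*Complex.I)))/2) • P = _
  rw [Complex.cos, Complex.sin]
  match_scalars <;> (ring_nf; try rw [Complex.I_sq]; try ring)

lemma su2_exists_log (V : Matrix (Fin 2) (Fin 2) ℂ)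
    (hV : V ∈ Matrix.specialUnitaryGroup (Fin 2) ℂ) :
    ∃ x y z : ℝ, NormedSpace.exp (Complex.I •
      !![(z:ℂ), (x:ℂ) - (y:ℂ)*Complex.I; (x:ℂ) + (y:ℂ)*Complex.I, -(z:ℂ)]) = V := by
  obtain ⟨hu, hdet⟩ := (Matrix.mem_specialUnitaryGroup_iff).mp hV
  have hu1 : V * star V = 1 := (Matrix.mem_unitaryGroup_iff).mp hu
  have hstar : star V = V.adjugate := by
    have hinv : star V = V⁻¹ := Matrix.inv_eq_right_inv hu1 |>.symm
    rw [hinv, Matrix.inv_def, hdet]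
    simp
  have had := Matrix.adjugate_fin_two V
  rw [had] at hstar
  have hd : V 1 1 = (starRingEnd ℂ) (V 0 0) := by
    have := congrFun (congrFun hstar 0) 0
    simpa [Matrix.star_apply] using this.symm
  have hc : V 1 0 = -(starRingEnd ℂ) (V 0 1) := by
    have := congrFun (congrFun hstar 1) 0
    simp [Matrix.star_apply] at this
    rw [eq_comm, neg_eq_iff_eq_neg] at this
    rw [this]
  set a := V 0 0 with ha
  set b := V 0 1 with hb
  have hnorm : a.re^2 + a.im^2 + b.re^2 + b.im^2 = 1 := by
    have := congrFun (congrFun hu1 0) 0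
    simp [Matrix.mul_apply, Fin.sum_univ_two, Matrix.star_apply, Matrix.one_apply] at this
    rw [Complex.mul_conj, Complex.mul_conj] at this
    have hre := congrArg Complex.re this
    simp [Complex.normSq_apply] at hre
    nlinarith [hre]
  set t := Real.arccos a.re with ht
  have hre1 : -1 ≤ a.re := by nlinarith [sq_nonneg a.im, sq_nonneg b.re, sq_nonneg b.im, sq_nonneg (a.re + 1)]
  have hre2 : a.re ≤ 1 := by nlinarith [sq_nonneg a.im, sq_nonneg b.re, sq_nonneg b.im, sq_nonneg (a.re - 1)]
  have hcos : Real.cos t = a.re := Real.cos_arccos hre1 hre2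
  set κ := Real.sin t with hκ
  have hκnn : 0 ≤ κ :=
    Real.sin_nonneg_of_nonneg_of_le_pi (Real.arccos_nonneg _) (Real.arccos_le_pi _)
  have hκ2 : κ^2 = a.im^2 + b.re^2 + b.im^2 := by
    have h1 := Real.sin_sq_add_cos_sq t
    rw [hcos] at h1; nlinarith [h1]
  by_cases hκ0 : κ = 0
  · have him : a.im = 0 := by nlinarith [sq_nonneg a.im, sq_nonneg b.re, sq_nonneg b.im]
    have hbre : b.re = 0 := by nlinarith [sq_nonneg a.im, sq_nonneg b.re, sq_nonneg b.im]
    have hbim : b.im = 0 := by nlinarith [sq_nonneg a.im, sq_nonneg b.re, sq_nonneg b.im]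
    have hsq : (a.re - 1) * (a.re + 1) = 0 := by nlinarith
    rcases mul_eq_zero.mp hsq with h1 | h1
    · -- a.re = 1, V = 1
      refine ⟨0, 0, 0, ?_⟩
      have h0 : Complex.I • (!![(0:ℂ), 0 - 0*Complex.I; 0 + 0*Complex.I, -0] :
          Matrix (Fin 2) (Fin 2) ℂ) = 0 := by
        ext i j; fin_cases i <;> fin_cases j <;> simp
      rw [show ((0:ℝ):ℂ) = (0:ℂ) by norm_num] at *
      rw [h0, NormedSpace.exp_zero]
      ext i j
      fin_cases i <;> fin_cases j <;>
        simp [Matrix.one_apply, hc, hd, ← ha, ← hb] <;>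
        · apply Complex.ext <;> simp [him, hbre, hbim] <;> linarith
    · -- a.re = -1, V = -1
      refine ⟨0, 0, Real.pi, ?_⟩
      set P : Matrix (Fin 2) (Fin 2) ℂ := !![1, 0; 0, -1] with hPdef
      have hP : P * P = 1 := by
        ext i j; fin_cases i <;> fin_cases j <;>
          simp [hPdef, Matrix.mul_apply, Fin.sum_univ_two, Matrix.one_apply]
      have hIA : Complex.I • (!![((Real.pi:ℝ):ℂ), ((0:ℝ):ℂ) - ((0:ℝ):ℂ)*Complex.I;
          ((0:ℝ):ℂ) + ((0:ℝ):ℂ)*Complex.I, -((Real.pi:ℝ):ℂ)] : Matrix (Fin 2) (Fin 2) ℂ)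
          = ((Real.pi:ℂ) * Complex.I) • P := by
        ext i j; fin_cases i <;> fin_cases j <;> simp [hPdef] <;> ring
      rw [hIA, exp_smul_involution P hP Real.pi]
      rw [← Complex.ofReal_cos, ← Complex.ofReal_sin, Real.cos_pi, Real.sin_pi]
      ext i j
      fin_cases i <;> fin_cases j <;>
        simp [hPdef, Matrix.one_apply, hc, hd, ← ha, ← hb] <;>
        · apply Complex.ext <;> simp [him, hbre, hbim] <;> linarith
  · refine ⟨t*b.im/κ, t*b.re/κ, t*a.im/κ, ?_⟩
    have hκ0' : (κ:ℂ) ≠ 0 := by exact_mod_cast hκ0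
    have hκ2C : (κ:ℂ)^2 = (a.im:ℂ)^2 + (b.re:ℂ)^2 + (b.im:ℂ)^2 := by exact_mod_cast hκ2
    set P : Matrix (Fin 2) (Fin 2) ℂ :=
      !![(a.im:ℂ)/κ, ((b.im:ℂ) - (b.re:ℂ)*Complex.I)/κ;
         ((b.im:ℂ) + (b.re:ℂ)*Complex.I)/κ, -((a.im:ℂ)/κ)] with hPdef
    have hP : P * P = 1 := by
      ext i j
      fin_cases i <;> fin_cases j
      · simp [hPdef, Matrix.mul_apply, Fin.sum_univ_two, Matrix.one_apply]
        field_simp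
        first
        | linear_combination hκ2C + (b.re:ℂ)^2 * Complex.I_sq
        | linear_combination -hκ2C - (b.re:ℂ)^2 * Complex.I_sq
      · simp [hPdef, Matrix.mul_apply, Fin.sum_univ_two, Matrix.one_apply]
        ring
      · simp [hPdef, Matrix.mul_apply, Fin.sum_univ_two, Matrix.one_apply]
        ring
      · simp [hPdef, Matrix.mul_apply, Fin.sum_univ_two, Matrix.one_apply]
        field_simp
        first
        | linear_combination hκ2C + (b.re:ℂ)^2 * Complex.I_sq
        | linear_combination -hκ2C - (b.re:ℂ)^2 * Complex.I_sq
    have hIA : Complex.I • (!![((t*a.im/κ:ℝ):ℂ),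
          ((t*b.im/κ:ℝ):ℂ) - ((t*b.re/κ:ℝ):ℂ)*Complex.I;
          ((t*b.im/κ:ℝ):ℂ) + ((t*b.re/κ:ℝ):ℂ)*Complex.I, -((t*a.im/κ:ℝ):ℂ)]
          : Matrix (Fin 2) (Fin 2) ℂ)
        = ((t:ℂ) * Complex.I) • P := by
      ext i j; fin_cases i <;> fin_cases j <;> (simp [hPdef]; push_cast; ring)
    rw [hIA, exp_smul_involution P hP t]
    rw [← Complex.ofReal_cos, ← Complex.ofReal_sin, hcos, ← hκ]
    have hconjA : (starRingEnd ℂ) a = (a.re:ℂ) - (a.im:ℂ)*Complex.I := by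
      apply Complex.ext <;> simp
    have hconjB : (starRingEnd ℂ) b = (b.re:ℂ) - (b.im:ℂ)*Complex.I := by
      apply Complex.ext <;> simp
    have hA : a = (a.re:ℂ) + (a.im:ℂ)*Complex.I := (Complex.re_add_im a).symm
    have hB : b = (b.re:ℂ) + (b.im:ℂ)*Complex.I := (Complex.re_add_im b).symm
    ext i j
    fin_cases i <;> fin_cases j
    · simp [hPdef, Matrix.one_apply, ← ha]
      field_simp
      linear_combination Complex.re_add_im a
    · simp [hPdef, Matrix.one_apply, ← hb]
      field_simp
      linear_combination Complex.re_add_im b - b.re*Complex.I_sq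
    · simp [hPdef, Matrix.one_apply, hc, hconjB]
      field_simp
      linear_combination b.re*Complex.I_sq
    · simp [hPdef, Matrix.one_apply, hd, hconjA, ← ha]
      field_simp
      ring


def GmatHom : (Matrix (Fin 2) (Fin 2) ℂ × Matrix (Fin 2) (Fin 2) ℂ) →ₐ[ℂ] Matrix (Fin 4) (Fin 4) ℂ where
  toFun p := Gmat p.1 p.2
  map_one' := by
    ext i j
    fin_cases i <;> fin_cases j <;> simp [Gmat, Matrix.one_apply] <;> rfl
  map_mul' p q := by
    ext i j
    fin_cases i <;> fin_cases j <;>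
      simp [Gmat, Matrix.mul_apply, Fin.sum_univ_four, Fin.sum_univ_two] <;> (try rfl) <;> ring
  map_zero' := by
    ext i j
    fin_cases i <;> fin_cases j <;> simp [Gmat, Matrix.vecHead, Matrix.vecTail, Function.comp] <;> (try rfl)
  map_add' p q := by
    ext i j
    fin_cases i <;> fin_cases j <;> simp [Gmat, Matrix.vecHead, Matrix.vecTail, Function.comp] <;> (try rfl)
  commutes' c := by
    ext i j
    fin_cases i <;> fin_cases j <;>
      simp [Gmat, Algebra.algebraMap_eq_smul_one, Matrix.one_apply, Matrix.vecHead,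
        Matrix.vecTail, Function.comp] <;> (try rfl)

lemma exp_Gmat (A B : Matrix (Fin 2) (Fin 2) ℂ) :
    NormedSpace.exp (Gmat A B) = Gmat (NormedSpace.exp A) (NormedSpace.exp B) := by
  haveI : @CompleteSpace (Matrix (Fin 2) (Fin 2) ℂ × Matrix (Fin 2) (Fin 2) ℂ) PseudoMetricSpace.toUniformSpace :=
    (inferInstance : CompleteSpace (Matrix (Fin 2) (Fin 2) ℂ × Matrix (Fin 2) (Fin 2) ℂ))
  have hcont : Continuous GmatHom := GmatHom.toLinearMap.continuous_of_finiteDimensional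
  have key := NormedSpace.map_exp GmatHom hcont ((A, B) : _ × _)
  have hprod : NormedSpace.exp ((A, B) : Matrix (Fin 2) (Fin 2) ℂ × Matrix (Fin 2) (Fin 2) ℂ)
      = (NormedSpace.exp A, NormedSpace.exp B) := by
    refine Prod.ext ?_ ?_
    · exact Prod.fst_exp _
    · exact Prod.snd_exp _
  erw [hprod] at key
  exact key.symm


set_option maxHeartbeats 2000000 in
lemma key_lemma (x y z x' y' z' : ℝ) :
    (Complex.I • ∑ μ : Fin 4, ∑ ν : Fin 4,
          ((!![0, -(z+z')/4, (y+y')/4, (x'-x)/4;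
            (z+z')/4, 0, -(x+x')/4, (y'-y)/4;
            -(y+y')/4, (x+x')/4, 0, -(z-z')/4;
            (x-x')/4, (y-y')/4, (z-z')/4, 0] : Matrix (Fin 4) (Fin 4) ℝ) μ ν : ℂ)
            • (cJW μ * cJW ν))
      = Gmat !![(z:ℂ), (x:ℂ) - (y:ℂ)*Complex.I; (x:ℂ) + (y:ℂ)*Complex.I, -(z:ℂ)]
             !![(z':ℂ), (x':ℂ) - (y':ℂ)*Complex.I; (x':ℂ) + (y':ℂ)*Complex.I, -(z':ℂ)] := by
  simp only [Fin.sum_univ_four, cJW]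
  ext i j
  fin_cases i <;> fin_cases j <;>
    (simp [Gmat, Matrix.mul_apply, Fin.sum_univ_four, Matrix.smul_apply,
      Matrix.add_apply, smul_eq_mul];
     try (push_cast; ring_nf; simp [Complex.I_sq]; try ring_nf))

theorem fermionic_matchgate_from_quadratic_hamiltonian
    (V W : Matrix (Fin 2) (Fin 2) ℂ)
    (hV : V ∈ Matrix.specialUnitaryGroup (Fin 2) ℂ)
    (hW : W ∈ Matrix.specialUnitaryGroup (Fin 2) ℂ) :
    ∃ h : Matrix (Fin 4) (Fin 4) ℝ, hᵀ = -h ∧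
      ∃ H : Matrix (Fin 4) (Fin 4) ℂ,
        H = Complex.I • ∑ μ : Fin 4, ∑ ν : Fin 4, (h μ ν : ℂ) • (cJW μ * cJW ν) ∧
        H.IsHermitian ∧
        NormedSpace.exp (Complex.I • H) = Gmat V W := by
  obtain ⟨x, y, z, hx⟩ := su2_exists_log V hV
  obtain ⟨x', y', z', hx'⟩ := su2_exists_log W hW
  refine ⟨!![0, -(z+z')/4, (y+y')/4, (x'-x)/4;
            (z+z')/4, 0, -(x+x')/4, (y'-y)/4;
            -(y+y')/4, (x+x')/4, 0, -(z-z')/4;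
            (x-x')/4, (y-y')/4, (z-z')/4, 0], ?_, ?_⟩
  · ext i j
    fin_cases i <;> fin_cases j <;>
      simp [Matrix.transpose_apply, Matrix.neg_apply] <;> (try rfl) <;> ring
  · refine ⟨_, rfl, ?_, ?_⟩
    · rw [key_lemma x y z x' y' z']
      show (Gmat _ _)ᴴ = Gmat _ _
      ext i j
      fin_cases i <;> fin_cases j <;>
        (simp [Gmat, Matrix.conjTranspose_apply, map_add, map_sub, _root_.map_mul,
          Complex.conj_ofReal, Complex.conj_I] <;> (try rfl) <;> ring)
    · rw [key_lemma x y z x' y' z']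
      have hsmul : Complex.I • Gmat
            !![(z:ℂ), (x:ℂ) - (y:ℂ)*Complex.I; (x:ℂ) + (y:ℂ)*Complex.I, -(z:ℂ)]
            !![(z':ℂ), (x':ℂ) - (y':ℂ)*Complex.I; (x':ℂ) + (y':ℂ)*Complex.I, -(z':ℂ)]
          = Gmat (Complex.I • !![(z:ℂ), (x:ℂ) - (y:ℂ)*Complex.I;
                (x:ℂ) + (y:ℂ)*Complex.I, -(z:ℂ)])
              (Complex.I • !![(z':ℂ), (x':ℂ) - (y':ℂ)*Complex.I;
                (x':ℂ) + (y':ℂ)*Complex.I, -(z':ℂ)]) := by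
        ext i j
        fin_cases i <;> fin_cases j <;>
          simp [Gmat, Matrix.smul_apply, smul_eq_mul] <;> (try rfl) <;> ring
      rw [hsmul, exp_Gmat, hx, hx']
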